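/- If G has the maximum spectral radius among all gem-free graphs with m ≥ 7 edges and no isolated vertices, excluding S_{(m+3)/2,2}, then G is connected. -/

import Mathlib

open scoped Classical
open SimpleGraph Matrix

def ContainsCopy {α β : Type*} (H : SimpleGraph α) (G : SimpleGraph β) : Prop :=
  ∃ f : α ↪ β, ∀ a b, H.Adj a b → G.Adj (f a) (f b)

def gem : SimpleGraph (Fin 5) :=
  SimpleGraph.fromRel (fun a b => (b.val = a.val + 1 ∧ b.val ≤ 3) ∨ b = 4)

def bookS (k : ℕ) : SimpleGraph (Fin 2 ⊕ Fin k) :=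
  SimpleGraph.fromRel (fun a _ => a.isLeft = true)

def pendantS (s t : ℕ) : SimpleGraph (Fin 2 ⊕ (Fin s ⊕ Fin t)) :=
  SimpleGraph.fromRel (fun a b =>
    match a, b with
    | Sum.inl _, Sum.inl _ => True
    | Sum.inl _, Sum.inr (Sum.inl _) => True
    | Sum.inl i, Sum.inr (Sum.inr _) => i = 0
    | _, _ => False)

def starG (r : ℕ) : SimpleGraph (Fin (r + 1)) :=
  SimpleGraph.fromRel (fun a _ => a = 0)

noncomputable def specRad {V : Type*} [Fintype V] (G : SimpleGraph V) : ℝ :=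
  sSup {μ : ℝ | Module.End.HasEigenvalue (Matrix.mulVecLin (G.adjMatrix ℝ)) μ}

noncomputable def edgeCount {V : Type*} [Fintype V] (G : SimpleGraph V) : ℕ :=
  G.edgeFinset.card

noncomputable def edgesIn {V : Type*} [Fintype V] (G : SimpleGraph V) (S : Finset V) : ℕ :=
  (G.edgeFinset.filter (fun e => ∀ v ∈ e, v ∈ S)).card

noncomputable def N0 {V : Type*} [Fintype V] (G : SimpleGraph V) (u : V) : Finset V :=
  (G.neighborFinset u).filter (fun v => ∀ w ∈ G.neighborFinset u, ¬ G.Adj v w)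

noncomputable def Nplus {V : Type*} [Fintype V] (G : SimpleGraph V) (u : V) : Finset V :=
  G.neighborFinset u \ N0 G u

noncomputable def Wset {V : Type*} [Fintype V] (G : SimpleGraph V) (u : V) : Finset V :=
  Finset.univ \ insert u (G.neighborFinset u)

def InFamily (m : ℕ) {V : Type*} [Fintype V] (G : SimpleGraph V) : Prop :=
  ¬ ContainsCopy gem G ∧ edgeCount G = m ∧ (∀ v : V, ∃ w, G.Adj v w) ∧
    ¬ Nonempty (G ≃g bookS ((m - 1) / 2))

def MaxInFamily (m : ℕ) {V : Type*} [Fintype V] (G : SimpleGraph V) : Prop :=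
  InFamily m G ∧ ∀ (n : ℕ) (H : SimpleGraph (Fin n)), InFamily m H → specRad H ≤ specRad G

def IsCutVertex {V : Type*} (G : SimpleGraph V) (v : V) : Prop :=
  ∃ a b : {x : V // x ≠ v}, G.Reachable a.1 b.1 ∧
    ¬ (G.induce {x : V | x ≠ v}).Reachable a b

set_option linter.unusedSectionVars false
set_option maxHeartbeats 1000000

open scoped RealInnerProductSpace

namespace SpecAux

variable {W : Type*} [Fintype W]

noncomputable def Tc (G : SimpleGraph W) : EuclideanSpace ℝ W →L[ℝ] EuclideanSpace ℝ W :=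
  LinearMap.toContinuousLinearMap (Matrix.toEuclideanLin (G.adjMatrix ℝ))

noncomputable def Lq : EuclideanSpace ℝ W ≃ₗ[ℝ] (W → ℝ) := WithLp.linearEquiv 2 ℝ (W → ℝ)

lemma Lq_Tc (G : SimpleGraph W) (x : EuclideanSpace ℝ W) :
    Lq (Tc G x) = (G.adjMatrix ℝ) *ᵥ (Lq x) := rfl

lemma isSelfAdjoint_Tc (G : SimpleGraph W) : IsSelfAdjoint (Tc G) := by
  rw [ContinuousLinearMap.isSelfAdjoint_iff_isSymmetric]
  have : ((G.adjMatrix ℝ)).IsHermitian := by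
    ext i j
    simp [Matrix.conjTranspose_apply, SimpleGraph.adjMatrix_apply, SimpleGraph.adj_comm]
  have h := Matrix.isHermitian_iff_isSymmetric.mp this
  simpa [Tc] using h

lemma inner_eq_sum (x y : EuclideanSpace ℝ W) : ⟪x, y⟫ = ∑ i, x i * y i := by
  simp [PiLp.inner_apply, RCLike.inner_apply, starRingEnd_apply]
  exact Finset.sum_congr rfl (fun _ _ => mul_comm _ _)

lemma Q_eq (G : SimpleGraph W) (x : EuclideanSpace ℝ W) :
    ⟪Tc G x, x⟫ = ∑ i, ((G.adjMatrix ℝ) *ᵥ (Lq x)) i * x i := by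
  rw [inner_eq_sum]; rfl

end SpecAux

namespace SpecAux
variable {W : Type*} [Fintype W]

lemma coord_le_norm (x : EuclideanSpace ℝ W) (i : W) : |x i| ≤ ‖x‖ := by
  rw [EuclideanSpace.norm_eq]
  have h1 : |x i| = Real.sqrt ((x i)^2) := by
    rw [Real.sqrt_sq_eq_abs]
  rw [h1]
  apply Real.sqrt_le_sqrt
  have := Finset.single_le_sum (f := fun j => ‖x j‖^2) (fun j _ => by positivity)
    (Finset.mem_univ i)
  simpa [Real.norm_eq_abs, sq_abs] using this

lemma Q_le_const (G : SimpleGraph W) (x : EuclideanSpace ℝ W) :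
    ⟪Tc G x, x⟫ ≤ (∑ i, ∑ j, (G.adjMatrix ℝ) i j) * ‖x‖^2 := by
  rw [Q_eq, Finset.sum_mul]
  apply Finset.sum_le_sum
  intro i _
  rw [Matrix.mulVec, dotProduct, Finset.sum_mul, Finset.sum_mul]
  apply Finset.sum_le_sum
  intro j _
  have hA : (0:ℝ) ≤ (G.adjMatrix ℝ) i j := by simp [SimpleGraph.adjMatrix_apply]; split <;> norm_num
  have hx : (Lq x) j * x i ≤ ‖x‖^2 := by
    calc (Lq x) j * x i ≤ |x j * x i| := le_abs_self _
      _ = |x j| * |x i| := abs_mul _ _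
      _ ≤ ‖x‖ * ‖x‖ := mul_le_mul (coord_le_norm x j) (coord_le_norm x i) (abs_nonneg _) (norm_nonneg _)
      _ = ‖x‖^2 := (sq ‖x‖).symm
  calc (G.adjMatrix ℝ) i j * (Lq x) j * x i = (G.adjMatrix ℝ) i j * ((Lq x) j * x i) := by ring
    _ ≤ (G.adjMatrix ℝ) i j * ‖x‖^2 := mul_le_mul_of_nonneg_left hx hA
    _ = (G.adjMatrix ℝ) i j * ‖x‖^2 := rfl

end SpecAux

namespace SpecAux
variable {W : Type*} [Fintype W]

noncomputable def lamStar (G : SimpleGraph W) : ℝ :=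
  ⨆ x : {x : EuclideanSpace ℝ W // x ≠ 0}, (Tc G).rayleighQuotient x

lemma reApply_eq (G : SimpleGraph W) (x : EuclideanSpace ℝ W) :
    (Tc G).reApplyInnerSelf x = ⟪Tc G x, x⟫ := by
  simp [ContinuousLinearMap.reApplyInnerSelf]

lemma rayleigh_eq (G : SimpleGraph W) (x : EuclideanSpace ℝ W) :
    (Tc G).rayleighQuotient x = ⟪Tc G x, x⟫ / ‖x‖^2 := by
  simp [ContinuousLinearMap.rayleighQuotient, reApply_eq]

lemma bddAbove_rayleigh (G : SimpleGraph W) :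
    BddAbove (Set.range fun x : {x : EuclideanSpace ℝ W // x ≠ 0} =>
      (Tc G).rayleighQuotient x) := by
  refine ⟨∑ i, ∑ j, (G.adjMatrix ℝ) i j, ?_⟩
  rintro r ⟨⟨x, hx⟩, rfl⟩
  have hn : (0:ℝ) < ‖x‖^2 := pow_pos (norm_pos_iff.mpr hx) 2
  show (Tc G).rayleighQuotient x ≤ _
  rw [rayleigh_eq, div_le_iff₀ hn]
  exact Q_le_const G x

lemma rayleigh_le_lamStar (G : SimpleGraph W) (x : {x : EuclideanSpace ℝ W // x ≠ 0}) :
    (Tc G).rayleighQuotient x ≤ lamStar G :=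
  le_ciSup (bddAbove_rayleigh G) x

lemma Q_le_spec (G : SimpleGraph W) (x : EuclideanSpace ℝ W) :
    ⟪Tc G x, x⟫ ≤ lamStar G * ‖x‖^2 := by
  by_cases hx : x = 0
  · simp [hx]
  · have := rayleigh_le_lamStar G ⟨x, hx⟩
    rw [rayleigh_eq] at this
    have hn : (0:ℝ) < ‖x‖^2 := pow_pos (norm_pos_iff.mpr hx) 2
    calc ⟪Tc G x, x⟫ = (⟪Tc G x, x⟫ / ‖x‖^2) * ‖x‖^2 := by field_simp
      _ ≤ lamStar G * ‖x‖^2 := by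
          exact mul_le_mul_of_nonneg_right this (le_of_lt hn)

lemma eigvec_of_Q_eq (G : SimpleGraph W) {x : EuclideanSpace ℝ W} (hx : x ≠ 0)
    (h : ⟪Tc G x, x⟫ = lamStar G * ‖x‖^2) :
    Module.End.HasEigenvector ((Tc G) : EuclideanSpace ℝ W →ₗ[ℝ] EuclideanSpace ℝ W)
      (lamStar G) x := by
  have hmax : IsMaxOn (Tc G).reApplyInnerSelf (Metric.sphere (0 : EuclideanSpace ℝ W) ‖x‖) x := by
    intro z hz
    have hz' : ‖z‖ = ‖x‖ := by simpa using hz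
    simp only [Set.mem_setOf_eq, reApply_eq]
    calc ⟪Tc G z, z⟫ ≤ lamStar G * ‖z‖^2 := Q_le_spec G z
      _ = ⟪Tc G x, x⟫ := by rw [hz', h]
  exact (isSelfAdjoint_Tc G).hasEigenvector_of_isMaxOn hx hmax

lemma hasEigenvalue_lamStar (G : SimpleGraph W) [Nonempty W] :
    Module.End.HasEigenvalue
      ((Tc G) : EuclideanSpace ℝ W →ₗ[ℝ] EuclideanSpace ℝ W) (lamStar G) := by
  have : Nontrivial (EuclideanSpace ℝ W) := by
    refine ⟨⟨EuclideanSpace.single (Classical.arbitrary W) (1:ℝ), 0, ?_⟩⟩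
    intro h
    have := congrArg (fun v : EuclideanSpace ℝ W => v (Classical.arbitrary W)) h
    simp [EuclideanSpace.single_apply] at this
  obtain ⟨x, hx⟩ : ∃ x : EuclideanSpace ℝ W, x ≠ 0 := exists_ne 0
  have H₁ : IsCompact (Metric.sphere (0 : EuclideanSpace ℝ W) ‖x‖) := isCompact_sphere _ _
  have H₂ : (Metric.sphere (0 : EuclideanSpace ℝ W) ‖x‖).Nonempty := ⟨x, by simp⟩
  obtain ⟨x₀, hx₀mem, hmax⟩ :=
    H₁.exists_isMaxOn H₂ (Tc G).reApplyInnerSelf_continuous.continuousOn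
  have hnx₀ : ‖x₀‖ = ‖x‖ := by simpa using hx₀mem
  have hx₀ : x₀ ≠ 0 := by
    intro h0
    rw [h0] at hnx₀
    simp at hnx₀
    exact hx (norm_eq_zero.mp hnx₀.symm)
  have hmax' : IsMaxOn (Tc G).reApplyInnerSelf (Metric.sphere (0 : EuclideanSpace ℝ W) ‖x₀‖) x₀ := by
    rwa [hnx₀]
  exact Module.End.hasEigenvalue_of_hasEigenvector
    ((isSelfAdjoint_Tc G).hasEigenvector_of_isMaxOn hx₀ hmax')

end SpecAux

namespace SpecAux
variable {W : Type*} [Fintype W]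

lemma hasEig_mulVecLin_iff (G : SimpleGraph W) (μ : ℝ) :
    Module.End.HasEigenvalue (Matrix.mulVecLin (G.adjMatrix ℝ)) μ ↔
      ∃ x : W → ℝ, x ≠ 0 ∧ (G.adjMatrix ℝ) *ᵥ x = μ • x := by
  constructor
  · intro h
    obtain ⟨v, hv⟩ := h.exists_hasEigenvector
    rw [Module.End.hasEigenvector_iff, Module.End.mem_eigenspace_iff] at hv
    exact ⟨v, hv.2, hv.1⟩
  · rintro ⟨x, hx, hAx⟩
    exact Module.End.hasEigenvalue_of_hasEigenvector
      (Module.End.hasEigenvector_iff.mpr ⟨Module.End.mem_eigenspace_iff.mpr hAx, hx⟩)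

lemma hasEig_Tc_iff (G : SimpleGraph W) (μ : ℝ) :
    Module.End.HasEigenvalue
      ((Tc G) : EuclideanSpace ℝ W →ₗ[ℝ] EuclideanSpace ℝ W) μ ↔
      ∃ x : W → ℝ, x ≠ 0 ∧ (G.adjMatrix ℝ) *ᵥ x = μ • x := by
  constructor
  · intro h
    obtain ⟨v, hv⟩ := h.exists_hasEigenvector
    rw [Module.End.hasEigenvector_iff, Module.End.mem_eigenspace_iff] at hv
    refine ⟨Lq v, fun h0 => hv.2 ((Lq (W:=W)).map_eq_zero_iff.mp h0), ?_⟩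
    have hv1 : Tc G v = μ • v := hv.1
    have := congrArg (Lq (W:=W)) hv1
    rw [Lq_Tc] at this
    rw [this]
    exact (Lq (W:=W)).map_smul _ _
  · rintro ⟨x, hx, hAx⟩
    have h1 : Tc G ((Lq (W:=W)).symm x) = μ • (Lq (W:=W)).symm x := by
      apply (Lq (W:=W)).injective
      rw [Lq_Tc]
      simp only [LinearEquiv.apply_symm_apply, _root_.map_smul]
      exact hAx
    have h2 : (Lq (W:=W)).symm x ≠ 0 := by
      intro h0
      apply hx
      have := congrArg (Lq (W:=W)) h0
      simpa using this
    exact Module.End.hasEigenvalue_of_hasEigenvector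
      (Module.End.hasEigenvector_iff.mpr ⟨Module.End.mem_eigenspace_iff.mpr h1, h2⟩)

lemma specRad_eq_lamStar (G : SimpleGraph W) [Nonempty W] :
    specRad G = lamStar G := by
  have hset : {μ : ℝ | Module.End.HasEigenvalue (Matrix.mulVecLin (G.adjMatrix ℝ)) μ} =
      {μ : ℝ | Module.End.HasEigenvalue
        ((Tc G) : EuclideanSpace ℝ W →ₗ[ℝ] EuclideanSpace ℝ W) μ} := by
    ext μ
    rw [Set.mem_setOf_eq, Set.mem_setOf_eq, hasEig_mulVecLin_iff, hasEig_Tc_iff]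
  have hmem : lamStar G ∈ {μ : ℝ | Module.End.HasEigenvalue
      ((Tc G) : EuclideanSpace ℝ W →ₗ[ℝ] EuclideanSpace ℝ W) μ} := hasEigenvalue_lamStar G
  have hub : ∀ μ ∈ {μ : ℝ | Module.End.HasEigenvalue
      ((Tc G) : EuclideanSpace ℝ W →ₗ[ℝ] EuclideanSpace ℝ W) μ}, μ ≤ lamStar G := by
    intro μ hμ
    obtain ⟨v, hv⟩ := (Module.End.HasEigenvalue.exists_hasEigenvector hμ)
    rw [Module.End.hasEigenvector_iff, Module.End.mem_eigenspace_iff] at hv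
    have hvne := hv.2
    have hTv : Tc G v = μ • v := hv.1
    have hQ : ⟪Tc G v, v⟫ = μ * ‖v‖^2 := by
      rw [hTv, real_inner_smul_left, real_inner_self_eq_norm_sq]
    have := rayleigh_le_lamStar G ⟨v, hvne⟩
    rw [rayleigh_eq] at this
    have hn : (0:ℝ) < ‖v‖^2 := pow_pos (norm_pos_iff.mpr hvne) 2
    calc μ = ⟪Tc G v, v⟫ / ‖v‖^2 := by rw [hQ]; field_simp
      _ ≤ lamStar G := this
  rw [specRad, hset]
  exact le_antisymm (csSup_le ⟨lamStar G, hmem⟩ hub) (le_csSup ⟨lamStar G, hub⟩ hmem)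

end SpecAux

namespace SpecAux
variable {W : Type*} [Fintype W]

lemma quad_expand (A : Matrix W W ℝ) (y : W → ℝ) :
    ∑ i, (A *ᵥ y) i * y i = ∑ i, ∑ j, A i j * y j * y i := by
  simp [Matrix.mulVec, dotProduct, Finset.sum_mul]

lemma sumsq_eq (x : W → ℝ) :
    ∑ i, x i * x i = ‖(Lq (W:=W)).symm x‖^2 := by
  rw [← real_inner_self_eq_norm_sq, inner_eq_sum]
  rfl

lemma quad_le (G : SimpleGraph W) [Nonempty W] (x : W → ℝ) :
    ∑ i, ((G.adjMatrix ℝ) *ᵥ x) i * x i ≤ specRad G * ∑ i, x i * x i := by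
  have h1 : ∑ i, ((G.adjMatrix ℝ) *ᵥ x) i * x i = ⟪Tc G ((Lq (W:=W)).symm x), (Lq (W:=W)).symm x⟫ := by
    rw [Q_eq]
    rfl
  rw [h1, sumsq_eq, specRad_eq_lamStar]
  exact Q_le_spec G _

lemma eig_of_quad_eq (G : SimpleGraph W) [Nonempty W] {x : W → ℝ} (hx : x ≠ 0)
    (h : ∑ i, ((G.adjMatrix ℝ) *ᵥ x) i * x i = specRad G * ∑ i, x i * x i) :
    (G.adjMatrix ℝ) *ᵥ x = specRad G • x := by
  have hx' : (Lq (W:=W)).symm x ≠ 0 := by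
    intro h0
    exact hx (by simpa using congrArg (Lq (W:=W)) h0)
  have h1 : ⟪Tc G ((Lq (W:=W)).symm x), (Lq (W:=W)).symm x⟫ = lamStar G * ‖(Lq (W:=W)).symm x‖^2 := by
    have e1 : ∑ i, ((G.adjMatrix ℝ) *ᵥ x) i * x i = ⟪Tc G ((Lq (W:=W)).symm x), (Lq (W:=W)).symm x⟫ := by
      rw [Q_eq]; rfl
    rw [← e1, h, sumsq_eq, specRad_eq_lamStar]
  have hev := eigvec_of_Q_eq G hx' h1
  rw [Module.End.hasEigenvector_iff, Module.End.mem_eigenspace_iff] at hev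
  have hev1 : Tc G ((Lq (W:=W)).symm x) = lamStar G • (Lq (W:=W)).symm x := hev.1
  have := congrArg (Lq (W:=W)) hev1
  rw [Lq_Tc] at this
  simp only [LinearEquiv.apply_symm_apply, _root_.map_smul] at this
  rw [specRad_eq_lamStar]
  exact this

lemma exists_nonneg_eigvec (G : SimpleGraph W) [Nonempty W] :
    ∃ x : W → ℝ, x ≠ 0 ∧ (∀ i, 0 ≤ x i) ∧ (G.adjMatrix ℝ) *ᵥ x = specRad G • x := by
  obtain ⟨v, hv⟩ := (hasEigenvalue_lamStar G).exists_hasEigenvector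
  rw [Module.End.hasEigenvector_iff, Module.End.mem_eigenspace_iff] at hv
  have hv1 : Tc G v = lamStar G • v := hv.1
  set x0 : W → ℝ := Lq v with hx0
  have heig : (G.adjMatrix ℝ) *ᵥ x0 = lamStar G • x0 := by
    have := congrArg (Lq (W:=W)) hv1
    rw [Lq_Tc] at this
    simpa [_root_.map_smul] using this
  have hx0ne : x0 ≠ 0 := by
    intro h0
    apply hv.2
    apply (Lq (W:=W)).injective
    exact h0.trans (map_zero _).symm
  set x : W → ℝ := fun i => |x0 i| with hxdef
  have hxne : x ≠ 0 := by
    intro h0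
    apply hx0ne
    funext i
    have := congrFun h0 i
    simpa [hxdef, abs_eq_zero] using this
  have hsq : ∑ i, x i * x i = ∑ i, x0 i * x0 i := by
    apply Finset.sum_congr rfl
    intro i _
    simp [hxdef, abs_mul_abs_self]
  have hq0 : ∑ i, ((G.adjMatrix ℝ) *ᵥ x0) i * x0 i = specRad G * ∑ i, x0 i * x0 i := by
    rw [heig, ← specRad_eq_lamStar]
    simp [Finset.mul_sum, mul_assoc]
  have hge : ∑ i, ((G.adjMatrix ℝ) *ᵥ x) i * x i ≥ specRad G * ∑ i, x i * x i := by
    rw [hsq, ← hq0, quad_expand, quad_expand]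
    apply Finset.sum_le_sum
    intro i _
    apply Finset.sum_le_sum
    intro j _
    have hA : (0:ℝ) ≤ (G.adjMatrix ℝ) i j := by
      simp [SimpleGraph.adjMatrix_apply]; split <;> norm_num
    calc (G.adjMatrix ℝ) i j * x0 j * x0 i ≤ |(G.adjMatrix ℝ) i j * x0 j * x0 i| := le_abs_self _
      _ = (G.adjMatrix ℝ) i j * |x0 j| * |x0 i| := by
          rw [abs_mul, abs_mul, abs_of_nonneg hA]
      _ = (G.adjMatrix ℝ) i j * x j * x i := rfl
  have hle := quad_le G x
  have heq := le_antisymm hle hge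
  exact ⟨x, hxne, fun i => abs_nonneg _, eig_of_quad_eq G hxne heq⟩

end SpecAux

namespace SpecAux

variable {V : Type*} [Fintype V]

/-- The graph obtained from the component of `u` by attaching `k` pendant vertices at `u`. -/
def glue (G : SimpleGraph V) (u : V) (k : ℕ) :
    SimpleGraph ({v : V // G.Reachable u v} ⊕ Fin k) where
  Adj p q :=
    match p, q with
    | Sum.inl a, Sum.inl b => G.Adj a.1 b.1
    | Sum.inl a, Sum.inr _ => a.1 = u
    | Sum.inr _, Sum.inl b => b.1 = u
    | Sum.inr _, Sum.inr _ => False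
  symm := by
    constructor
    rintro (a | i) (b | j) h
    · exact G.adj_symm h
    · exact h
    · exact h
    · exact h
  loopless := by
    constructor
    rintro (a | i) h
    · exact G.irrefl h
    · exact h

@[simp] lemma glue_adj_inl_inl (G : SimpleGraph V) (u : V) (k : ℕ)
    (a b : {v : V // G.Reachable u v}) :
    (glue G u k).Adj (Sum.inl a) (Sum.inl b) ↔ G.Adj a.1 b.1 := Iff.rfl

@[simp] lemma glue_adj_inl_inr (G : SimpleGraph V) (u : V) (k : ℕ)
    (a : {v : V // G.Reachable u v}) (i : Fin k) :
    (glue G u k).Adj (Sum.inl a) (Sum.inr i) ↔ a.1 = u := Iff.rfl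

@[simp] lemma glue_adj_inr_inl (G : SimpleGraph V) (u : V) (k : ℕ)
    (a : {v : V // G.Reachable u v}) (i : Fin k) :
    (glue G u k).Adj (Sum.inr i) (Sum.inl a) ↔ a.1 = u := Iff.rfl

@[simp] lemma glue_adj_inr_inr (G : SimpleGraph V) (u : V) (k : ℕ) (i j : Fin k) :
    ¬ (glue G u k).Adj (Sum.inr i) (Sum.inr j) := fun h => h

end SpecAux


namespace SpecAux
set_option linter.unusedSectionVars false

variable {V : Type*} [Fintype V]

lemma card_right_edges (G : SimpleGraph V) (u : V) (k : ℕ) :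
    ((glue G u k).edgeFinset.filter (fun e => ∃ p ∈ e, p.isRight = true)).card = k := by
  have himg : ((glue G u k).edgeFinset.filter (fun e => ∃ p ∈ e, p.isRight = true)) =
      Finset.image (fun i : Fin k =>
        s(Sum.inl (⟨u, SimpleGraph.Reachable.refl u⟩ : {v : V // G.Reachable u v}), Sum.inr i))
        Finset.univ := by
    ext e
    induction e using Sym2.ind with
    | _ p q =>
      simp only [Finset.mem_filter, SimpleGraph.mem_edgeFinset, SimpleGraph.mem_edgeSet,
        Finset.mem_image, Finset.mem_univ, true_and]
      constructor
      · rintro ⟨hadj, hr⟩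
        rcases p with a | i <;> rcases q with b | j
        · exfalso
          obtain ⟨p', hp', hr'⟩ := hr
          rcases Sym2.mem_iff.mp hp' with h | h <;> subst h <;> simp at hr'
        · have ha : a.1 = u := hadj
          refine ⟨j, ?_⟩
          have : a = (⟨u, SimpleGraph.Reachable.refl u⟩ : {v : V // G.Reachable u v}) :=
            Subtype.ext ha
          rw [this]
        · have hb : b.1 = u := hadj
          refine ⟨i, ?_⟩
          have : b = (⟨u, SimpleGraph.Reachable.refl u⟩ : {v : V // G.Reachable u v}) :=
            Subtype.ext hb
          rw [this, Sym2.eq_swap]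
        · exact absurd hadj (glue_adj_inr_inr G u k i j)
      · rintro ⟨i, hi⟩
        constructor
        · have h2 : s(p, q) ∈ (glue G u k).edgeSet := by
            rw [← hi]
            exact (SimpleGraph.mem_edgeSet _).mpr (by simp)
          exact h2
        · refine ⟨Sum.inr i, ?_, rfl⟩
          rw [← hi]
          simp
  rw [himg]
  rw [Finset.card_image_of_injective _ ?_, Finset.card_univ, Fintype.card_fin]
  intro i j hij
  rw [Sym2.eq_iff] at hij
  rcases hij with ⟨-, h⟩ | ⟨h, -⟩
  · exact Sum.inr.inj h
  · exact absurd h (by simp)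

lemma card_left_edges (G : SimpleGraph V) (u : V) (k : ℕ) :
    ((glue G u k).edgeFinset.filter (fun e => ¬ ∃ p ∈ e, p.isRight = true)).card =
      (G.edgeFinset.filter (fun e => ∀ a ∈ e, G.Reachable u a)).card := by
  classical
  apply Finset.card_nbij' (Sym2.map (Sum.elim Subtype.val (fun _ => u)))
    (Sym2.map (fun v => if h : G.Reachable u v then
      Sum.inl (⟨v, h⟩ : {v : V // G.Reachable u v})
      else Sum.inl ⟨u, SimpleGraph.Reachable.refl u⟩))
  · intro e he
    induction e using Sym2.ind with
    | _ p q =>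
      simp only [Finset.mem_coe, Finset.mem_filter, SimpleGraph.mem_edgeFinset, SimpleGraph.mem_edgeSet] at he ⊢
      obtain ⟨hadj, hnr⟩ := he
      rcases p with a | i <;> rcases q with b | j
      · refine ⟨?_, ?_⟩
        · simpa using (hadj : G.Adj a.1 b.1)
        · intro v hv
          rcases Sym2.mem_iff.mp (by simpa using hv) with h | h
          · subst h; exact a.2
          · subst h; exact b.2
      · exact absurd ⟨Sum.inr j, by simp, rfl⟩ hnr
      · exact absurd ⟨Sum.inr i, by simp, rfl⟩ hnr
      · exact absurd hadj (glue_adj_inr_inr G u k i j)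
  · intro e he
    induction e using Sym2.ind with
    | _ v w =>
      simp only [Finset.mem_coe, Finset.mem_filter, SimpleGraph.mem_edgeFinset, SimpleGraph.mem_edgeSet] at he ⊢
      obtain ⟨hadj, hP⟩ := he
      have hv : G.Reachable u v := hP v (by simp)
      have hw : G.Reachable u w := hP w (by simp)
      rw [Sym2.map_pair_eq, dif_pos hv, dif_pos hw]
      refine ⟨hadj, ?_⟩
      rintro ⟨p', hp', hr'⟩
      rcases Sym2.mem_iff.mp hp' with h | h <;> subst h <;> simp at hr'
  · intro e he
    induction e using Sym2.ind with
    | _ p q =>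
      simp only [Finset.mem_coe, Finset.mem_filter, SimpleGraph.mem_edgeFinset, SimpleGraph.mem_edgeSet] at he
      obtain ⟨hadj, hnr⟩ := he
      rcases p with a | i <;> rcases q with b | j
      · rw [Sym2.map_pair_eq, Sym2.map_pair_eq]
        simp only [Sum.elim_inl]
        simp [a.2, b.2]
      · exact absurd ⟨Sum.inr j, by simp, rfl⟩ hnr
      · exact absurd ⟨Sum.inr i, by simp, rfl⟩ hnr
      · exact absurd hadj (glue_adj_inr_inr G u k i j)
  · intro e he
    induction e using Sym2.ind with
    | _ v w =>
      simp only [Finset.mem_coe, Finset.mem_filter, SimpleGraph.mem_edgeFinset, SimpleGraph.mem_edgeSet] at he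
      obtain ⟨hadj, hP⟩ := he
      have hv : G.Reachable u v := hP v (by simp)
      have hw : G.Reachable u w := hP w (by simp)
      rw [Sym2.map_pair_eq, dif_pos hv, dif_pos hw, Sym2.map_pair_eq]
      rfl

lemma edgeCount_glue (G : SimpleGraph V) (u : V) (k : ℕ) :
    edgeCount (glue G u k) =
      (G.edgeFinset.filter (fun e => ∀ a ∈ e, G.Reachable u a)).card + k := by
  classical
  have := Finset.card_filter_add_card_filter_not
    (s := (glue G u k).edgeFinset) (p := fun e => ∃ p ∈ e, p.isRight = true)
  rw [edgeCount, ← this, card_right_edges, card_left_edges, Nat.add_comm]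

end SpecAux

namespace SpecAux
variable {V : Type*} [Fintype V]

lemma specRad_lt_glue (G : SimpleGraph V) (u : V) (k : ℕ) (hk : 0 < k)
    (x : V → ℝ) (hxu : 0 < x u)
    (heig : (G.adjMatrix ℝ) *ᵥ x = specRad G • x) :
    specRad G < specRad (glue G u k) := by
  classical
  set C := {v : V // G.Reachable u v}
  set H := glue G u k
  haveI : Nonempty ({v : V // G.Reachable u v} ⊕ Fin k) :=
    ⟨Sum.inl ⟨u, SimpleGraph.Reachable.refl u⟩⟩
  haveI : Nonempty V := ⟨u⟩
  set y : ({v : V // G.Reachable u v} ⊕ Fin k) → ℝ :=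
    Sum.elim (fun a => x a.1) (fun _ => 0) with hy
  have hrow : ∀ a : {v : V // G.Reachable u v},
      ((H.adjMatrix ℝ) *ᵥ y) (Sum.inl a) = ((G.adjMatrix ℝ) *ᵥ x) a.1 := by
    intro a
    have h1 : ((H.adjMatrix ℝ) *ᵥ y) (Sum.inl a) =
        ∑ b : {v : V // G.Reachable u v}, (if G.Adj a.1 b.1 then (1:ℝ) else 0) * x b.1 := by
      rw [Matrix.mulVec, dotProduct, Fintype.sum_sum_type]
      simp only [hy, Sum.elim_inl, Sum.elim_inr, mul_zero, Finset.sum_const_zero, add_zero]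
      apply Finset.sum_congr rfl
      intro b _
      congr 1
    have h2 : ((G.adjMatrix ℝ) *ᵥ x) a.1 =
        ∑ v ∈ Finset.univ.filter (fun v => G.Reachable u v),
          (if G.Adj a.1 v then (1:ℝ) else 0) * x v := by
      rw [Matrix.mulVec, dotProduct]
      rw [← Finset.sum_subset (Finset.filter_subset (fun v => G.Reachable u v) Finset.univ)]
      · apply Finset.sum_congr rfl
        intro v _
        congr 1
      · intro v _ hv
        simp only [Finset.mem_filter, Finset.mem_univ, true_and] at hv
        have : ¬ G.Adj a.1 v := fun hadj => hv (a.2.trans hadj.reachable)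
        simp [this]
    have h3 : ∑ v ∈ Finset.univ.filter (fun v => G.Reachable u v),
          (if G.Adj a.1 v then (1:ℝ) else 0) * x v =
        ∑ b : {v : V // G.Reachable u v}, (if G.Adj a.1 b.1 then (1:ℝ) else 0) * x b.1 := by
      rw [Finset.sum_subtype]
      intro v
      simp
    rw [h1, h2, h3]
  have hquad : ∑ p, ((H.adjMatrix ℝ) *ᵥ y) p * y p =
      specRad G * ∑ p, y p * y p := by
    rw [Fintype.sum_sum_type, Fintype.sum_sum_type]
    simp only [hy, Sum.elim_inl, Sum.elim_inr, mul_zero, Finset.sum_const_zero, add_zero,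
      zero_mul]
    rw [Finset.mul_sum]
    apply Finset.sum_congr rfl
    intro a _
    rw [hrow a, heig]
    simp [mul_assoc]
  have hS : 0 < ∑ p, y p * y p := by
    have hterm : (0:ℝ) < y (Sum.inl ⟨u, SimpleGraph.Reachable.refl u⟩) *
        y (Sum.inl ⟨u, SimpleGraph.Reachable.refl u⟩) := by
      simp only [hy, Sum.elim_inl]
      exact mul_pos hxu hxu
    have hnn : ∀ p ∈ Finset.univ, (0:ℝ) ≤ y p * y p := fun p _ => mul_self_nonneg _
    calc (0:ℝ) < _ := hterm
      _ ≤ ∑ p, y p * y p := Finset.single_le_sum hnn (Finset.mem_univ _)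
  have hle : specRad G ≤ specRad H := by
    have := quad_le H y
    rw [hquad] at this
    exact le_of_mul_le_mul_right (by linarith) hS
  rcases lt_or_eq_of_le hle with h | h
  · exact h
  · exfalso
    have hyne : y ≠ 0 := by
      intro h0
      have := congrFun h0 (Sum.inl ⟨u, SimpleGraph.Reachable.refl u⟩)
      simp only [hy, Sum.elim_inl, Pi.zero_apply] at this
      exact absurd this (ne_of_gt hxu)
    have heigH : (H.adjMatrix ℝ) *ᵥ y = specRad H • y := by
      apply eig_of_quad_eq H hyne
      rw [hquad, h]
    have := congrFun heigH (Sum.inr ⟨0, hk⟩)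
    have hlhs : ((H.adjMatrix ℝ) *ᵥ y) (Sum.inr ⟨0, hk⟩) = x u := by
      rw [Matrix.mulVec, dotProduct, Fintype.sum_sum_type]
      simp only [hy, Sum.elim_inl, Sum.elim_inr, mul_zero, Finset.sum_const_zero, add_zero]
      rw [Finset.sum_eq_single (⟨u, SimpleGraph.Reachable.refl u⟩ : {v : V // G.Reachable u v})]
      · simp [H, SimpleGraph.adjMatrix_apply]
      · intro b _ hb
        have : ¬ (b.1 = u) := fun hbu => hb (Subtype.ext hbu)
        simp [H, SimpleGraph.adjMatrix_apply, this]
      · intro hmem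
        exact absurd (Finset.mem_univ _) hmem
    rw [hlhs] at this
    simp only [Pi.smul_apply, hy, Sum.elim_inr, smul_eq_mul, mul_zero] at this
    exact absurd this (ne_of_gt hxu)

end SpecAux




namespace SpecAux

lemma eig_transfer {W1 W2 : Type*} [Fintype W1] [Fintype W2]
    {G1 : SimpleGraph W1} {G2 : SimpleGraph W2} (e : G1 ≃g G2) (μ : ℝ)
    (h : ∃ x : W1 → ℝ, x ≠ 0 ∧ (G1.adjMatrix ℝ) *ᵥ x = μ • x) :
    ∃ x : W2 → ℝ, x ≠ 0 ∧ (G2.adjMatrix ℝ) *ᵥ x = μ • x := by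
  classical
  obtain ⟨x, hxne, heig⟩ := h
  refine ⟨x ∘ e.symm, ?_, ?_⟩
  · intro h0
    apply hxne
    funext v
    have := congrFun h0 (e v)
    simpa using this
  · funext w
    have key : ((G2.adjMatrix ℝ) *ᵥ (x ∘ e.symm)) w =
        ((G1.adjMatrix ℝ) *ᵥ x) (e.symm w) := by
      rw [Matrix.mulVec, dotProduct, Matrix.mulVec, dotProduct]
      apply Fintype.sum_equiv e.toEquiv.symm
      intro i
      simp only [Function.comp_apply, SimpleGraph.adjMatrix_apply]
      have hiff : G2.Adj w i ↔ G1.Adj (e.symm w) (e.symm i) := by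
        rw [← e.symm.map_rel_iff]
      rw [if_congr hiff rfl rfl]
      rfl
    rw [key, heig]
    simp

lemma specRad_iso {W1 W2 : Type*} [Fintype W1] [Fintype W2]
    {G1 : SimpleGraph W1} {G2 : SimpleGraph W2} (e : G1 ≃g G2) :
    specRad G1 = specRad G2 := by
  unfold specRad
  congr 1
  ext μ
  rw [Set.mem_setOf_eq, Set.mem_setOf_eq, hasEig_mulVecLin_iff, hasEig_mulVecLin_iff]
  exact ⟨eig_transfer e μ, eig_transfer e.symm μ⟩

end SpecAux

namespace SpecAux
set_option linter.unusedSectionVars false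
variable {V : Type*} [Fintype V]

instance : DecidableRel gem.Adj := fun a b =>
  decidable_of_iff' _ (SimpleGraph.fromRel_adj _ a b)

lemma gem_two_neighbors : ∀ a : Fin 5, ∃ b c : Fin 5, b ≠ c ∧ gem.Adj a b ∧ gem.Adj a c := by
  decide

lemma containsCopy_glue (G : SimpleGraph V) (u : V) (k : ℕ)
    (h : ContainsCopy gem (glue G u k)) : ContainsCopy gem G := by
  obtain ⟨f, hf⟩ := h
  have hL : ∀ a : Fin 5, ∃ w : {v : V // G.Reachable u v}, f a = Sum.inl w := by
    intro a
    obtain ⟨b, c, hbc, hab, hac⟩ := gem_two_neighbors a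
    rcases hfa : f a with w | i
    · exact ⟨w, rfl⟩
    · exfalso
      have h1 := hf a b hab
      have h2 := hf a c hac
      rw [hfa] at h1 h2
      rcases hfb : f b with wb | ib
      · rcases hfc : f c with wc | ic
        · rw [hfb] at h1
          rw [hfc] at h2
          have hb' : wb.1 = u := h1
          have hc' : wc.1 = u := h2
          apply hbc
          apply f.injective
          rw [hfb, hfc, Subtype.ext (hb'.trans hc'.symm)]
        · rw [hfc] at h2
          exact h2
      · rw [hfb] at h1
        exact h1
  choose wF hwF using hL
  refine ⟨⟨fun a => (wF a).1, ?_⟩, ?_⟩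
  · intro a b hab
    apply f.injective
    rw [hwF a, hwF b, Subtype.ext hab]
  · intro a b hadj
    have := hf a b hadj
    rw [hwF a, hwF b] at this
    exact this

lemma glue_ne_book (G : SimpleGraph V) (u : V) (k : ℕ) (hk : 0 < k)
    (k' : ℕ) (hk' : 2 ≤ k') : ¬ Nonempty (glue G u k ≃g bookS k') := by
  rintro ⟨j⟩
  set p : ({v : V // G.Reachable u v} ⊕ Fin k) := Sum.inr ⟨0, hk⟩ with hp
  have hbook2 : ∀ v : Fin 2 ⊕ Fin k', ∃ q1 q2 : Fin 2 ⊕ Fin k',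
      q1 ≠ q2 ∧ (bookS k').Adj v q1 ∧ (bookS k').Adj v q2 := by
    intro v
    rcases v with i | i
    · refine ⟨Sum.inr ⟨0, by omega⟩, Sum.inr ⟨1, by omega⟩, by simp [Fin.ext_iff], ?_, ?_⟩ <;>
      · rw [bookS, SimpleGraph.fromRel_adj]
        exact ⟨by simp, Or.inl rfl⟩
    · refine ⟨Sum.inl 0, Sum.inl 1, by simp, ?_, ?_⟩ <;>
      · rw [bookS, SimpleGraph.fromRel_adj]
        exact ⟨by simp, Or.inr rfl⟩
  obtain ⟨q1, q2, hq12, hq1, hq2⟩ := hbook2 (j p)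
  have ha1 : (glue G u k).Adj p (j.symm q1) := by
    rw [← j.map_rel_iff]
    simpa using hq1
  have ha2 : (glue G u k).Adj p (j.symm q2) := by
    rw [← j.map_rel_iff]
    simpa using hq2
  have huniq : ∀ z1 z2 : ({v : V // G.Reachable u v} ⊕ Fin k),
      (glue G u k).Adj p z1 → (glue G u k).Adj p z2 → z1 = z2 := by
    rintro (b1 | i1) (b2 | i2) h1 h2
    · have hb1 : b1.1 = u := h1
      have hb2 : b2.1 = u := h2
      rw [Subtype.ext (hb1.trans hb2.symm)]
    · exact absurd h2 (glue_adj_inr_inr G u k _ _)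
    · exact absurd h1 (glue_adj_inr_inr G u k _ _)
    · exact absurd h1 (glue_adj_inr_inr G u k _ _)
  exact hq12 (by
    have := huniq _ _ ha1 ha2
    have h2 := congrArg j this
    simpa using h2)

lemma glue_no_isolated (G : SimpleGraph V) (u : V) (k : ℕ)
    (hdeg : ∀ v : V, ∃ w, G.Adj v w) :
    ∀ p : ({v : V // G.Reachable u v} ⊕ Fin k), ∃ q, (glue G u k).Adj p q := by
  rintro (a | i)
  · obtain ⟨b, hb⟩ := hdeg a.1
    exact ⟨Sum.inl ⟨b, a.2.trans hb.reachable⟩, hb⟩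
  · exact ⟨Sum.inl ⟨u, SimpleGraph.Reachable.refl u⟩, rfl⟩

end SpecAux




theorem stmt5 {V : Type*} [Fintype V] (G : SimpleGraph V) (m : ℕ) (hm : 7 ≤ m)
    (hmax : MaxInFamily m G) : G.Connected := by
  classical
  obtain ⟨⟨hgem, hedge, hdeg, hbook⟩, hle⟩ := hmax
  have hECpos : 0 < G.edgeFinset.card := by
    have : G.edgeFinset.card = m := hedge
    omega
  obtain ⟨e0, he0⟩ := Finset.card_pos.mp hECpos
  have hVne : Nonempty V := by
    induction e0 using Sym2.ind with
    | _ a b => exact ⟨a⟩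
  rw [SimpleGraph.connected_iff]
  refine ⟨?_, hVne⟩
  by_contra hpre
  obtain ⟨x, hxne, hxnn, heig⟩ := SpecAux.exists_nonneg_eigvec G
  obtain ⟨u, hxu0⟩ : ∃ u, x u ≠ 0 := Function.ne_iff.mp hxne
  have hxu : 0 < x u := (hxnn u).lt_of_ne (Ne.symm hxu0)
  obtain ⟨w, hwu⟩ : ∃ w, ¬ G.Reachable u w := by
    by_contra hall
    push_neg at hall
    exact hpre fun a b => (hall a).symm.trans (hall b)
  set k := (G.edgeFinset.filter (fun e => ¬ ∀ a ∈ e, G.Reachable u a)).card with hkdef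
  have hkpos : 0 < k := by
    obtain ⟨w', hww'⟩ := hdeg w
    apply Finset.card_pos.mpr
    refine ⟨s(w, w'), Finset.mem_filter.mpr ⟨SimpleGraph.mem_edgeFinset.mpr hww', ?_⟩⟩
    intro hP
    exact hwu (hP w (by simp))
  set H := SpecAux.glue G u k with hH
  have hlt := SpecAux.specRad_lt_glue G u k hkpos x hxu heig
  -- edge count of H
  have hEH : edgeCount H = m := by
    rw [hH, SpecAux.edgeCount_glue, hkdef]
    rw [Finset.card_filter_add_card_filter_not]
    exact hedge
  -- transport to Fin n
  set n := Fintype.card ({v : V // G.Reachable u v} ⊕ Fin k) with hn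
  set eqv : Fin n ≃ ({v : V // G.Reachable u v} ⊕ Fin k) :=
    (Fintype.equivFin ({v : V // G.Reachable u v} ⊕ Fin k)).symm with heqv
  set H' : SimpleGraph (Fin n) := H.comap eqv with hH'
  have iso : H' ≃g H := SimpleGraph.Iso.comap eqv H
  have hfam : InFamily m H' := by
    refine ⟨?_, ?_, ?_, ?_⟩
    · rintro ⟨f, hf⟩
      apply hgem
      apply SpecAux.containsCopy_glue G u k
      refine ⟨⟨fun a => iso (f a), fun a b hab => f.injective (iso.injective hab)⟩, ?_⟩
      intro a b hadj
      show H.Adj (iso (f a)) (iso (f b))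
      exact iso.map_rel_iff.mpr (hf a b hadj)
    · rw [show edgeCount H' = edgeCount H from SimpleGraph.Iso.card_edgeFinset_eq iso]
      exact hEH
    · intro v
      obtain ⟨q, hq⟩ := SpecAux.glue_no_isolated G u k hdeg (eqv v)
      refine ⟨eqv.symm q, ?_⟩
      show H.Adj (eqv v) (eqv (eqv.symm q))
      rw [Equiv.apply_symm_apply]
      exact hq
    · rintro ⟨j⟩
      exact SpecAux.glue_ne_book G u k hkpos ((m - 1) / 2) (by omega)
        ⟨j.comp iso.symm⟩
  have hle' := hle n H' hfam
  rw [SpecAux.specRad_iso iso] at hle'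
  linarith
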